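/- arXiv:2510.10202 — 3 statements merged into one kernel-verified Lean document; each statement's English description precedes it below -/
import Mathlib

section
/- Suppose φ₀ : (Fin n → ℝ) → ℝ is differentiable and satisfies the steady-state HJB equation with state cost m₀ (for all x: ∇φ₀(x) ⬝ᵥ f(x) − (1/4)·((g x)ᵀ.mulVec (∇φ₀ x)) ⬝ᵥ (R⁻¹.mulVec ((g x)ᵀ.mulVec (∇φ₀ x))) + m₀(x) = 0), and h : (Fin n → ℝ) → ℝ is differentiable and satisfies for all x: ∇h(x) ⬝ᵥ (f(x) − (1/2)·(g x).mulVec (R⁻¹.mulVec ((g x)ᵀ.mulVec (∇φ₀ x)))) = −m̄(x). Set φ_p := φ₀ + h and u*_p(y) := −(1/2)·R⁻¹.mulVec ((g y)ᵀ.mulVec (∇φ_p y)). If x : ℝ → (Fin n → ℝ) is differentiable and solves x'(t) = f(x(t)) + (g (x t)).mulVec (u*_p (x t)) for all t, then for every t the composite t ↦ φ_p(x(t)) has derivative at t equal to −m₀(x(t)) − m̄(x(t)) − (1/4)·‖R⁻¹.mulVec ((g (x t))ᵀ.mulVec (∇h (x t)))‖²_R − ‖u*_p(x(t))‖²_R.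 -/
open Matrix

/-- Euclidean gradient of a scalar function on `Fin n → ℝ`:
the vector of partial derivatives. -/
noncomputable def grad {n : ℕ} (φ : (Fin n → ℝ) → ℝ) (x : Fin n → ℝ) : Fin n → ℝ :=
  fun i => fderiv ℝ φ x (Pi.single i 1)

/-- `R`-weighted squared norm `‖u‖²_R = u ⬝ᵥ R.mulVec u`. -/
def sqR {p : ℕ} (R : Matrix (Fin p) (Fin p) ℝ) (u : Fin p → ℝ) : ℝ :=
  u ⬝ᵥ R.mulVec u

lemma grad_add' {n : ℕ} (φ ψ : (Fin n → ℝ) → ℝ) (hφ : Differentiable ℝ φ)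
    (hψ : Differentiable ℝ ψ) (x : Fin n → ℝ) :
    grad (φ + ψ) x = grad φ x + grad ψ x := by
  funext i
  have he : φ + ψ = fun y => φ y + ψ y := rfl
  simp only [grad, he, fderiv_fun_add (hφ x) (hψ x), ContinuousLinearMap.add_apply, Pi.add_apply]

lemma fderiv_apply_eq_dot {n : ℕ} (φ : (Fin n → ℝ) → ℝ) (x v : Fin n → ℝ) :
    fderiv ℝ φ x v = grad φ x ⬝ᵥ v := by
  have hv : v = ∑ i, v i • (Pi.single i 1 : Fin n → ℝ) := by
    funext j
    rw [Finset.sum_apply]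
    simp [Pi.single_apply]
  conv_lhs => rw [hv]
  rw [map_sum]
  simp [grad, dotProduct, mul_comm]

theorem stmt_9 {n p : ℕ}
    (f : (Fin n → ℝ) → (Fin n → ℝ))
    (g : (Fin n → ℝ) → Matrix (Fin n) (Fin p) ℝ)
    (R : Matrix (Fin p) (Fin p) ℝ)
    (hRsymm : R.IsSymm) (hRpd : R.PosDef)
    (m₀ mbar : (Fin n → ℝ) → ℝ)
    (φ₀ h : (Fin n → ℝ) → ℝ)
    (hφ₀ : Differentiable ℝ φ₀) (hh : Differentiable ℝ h)
    (hHJB : ∀ x, grad φ₀ x ⬝ᵥ f x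
        - (1/4) * ((g x)ᵀ.mulVec (grad φ₀ x) ⬝ᵥ R⁻¹.mulVec ((g x)ᵀ.mulVec (grad φ₀ x)))
        + m₀ x = 0)
    (hPDE : ∀ x, grad h x ⬝ᵥ
        (f x - (1/2 : ℝ) • (g x).mulVec (R⁻¹.mulVec ((g x)ᵀ.mulVec (grad φ₀ x)))) = - mbar x)
    (φp : (Fin n → ℝ) → ℝ) (hφp : φp = φ₀ + h)
    (ustarp : (Fin n → ℝ) → (Fin p → ℝ))
    (hustarp : ∀ y, ustarp y = -(1/2 : ℝ) • R⁻¹.mulVec ((g y)ᵀ.mulVec (grad φp y)))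
    (x : ℝ → (Fin n → ℝ))
    (hx : ∀ t, HasDerivAt x (f (x t) + (g (x t)).mulVec (ustarp (x t))) t) :
    ∀ t, HasDerivAt (fun s => φp (x s))
      (-(m₀ (x t)) - mbar (x t)
        - (1/4) * sqR R (R⁻¹.mulVec ((g (x t))ᵀ.mulVec (grad h (x t))))
        - sqR R (ustarp (x t))) t := by
  intro t
  have hdet : IsUnit R.det := isUnit_iff_ne_zero.mpr hRpd.det_pos.ne'
  have hRRinv : R * R⁻¹ = 1 := Matrix.mul_nonsing_inv R hdet
  have hMsym : R⁻¹ᵀ = R⁻¹ := by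
    rw [Matrix.transpose_nonsing_inv, hRsymm.eq]
  -- swap lemma for R⁻¹
  have hswap : ∀ u w : Fin p → ℝ, u ⬝ᵥ R⁻¹.mulVec w = w ⬝ᵥ R⁻¹.mulVec u := by
    intro u w
    rw [Matrix.dotProduct_mulVec, ← Matrix.mulVec_transpose, hMsym, dotProduct_comm]
  have hdot : ∀ (c : Fin n → ℝ) (w : Fin p → ℝ),
      c ⬝ᵥ (g (x t)).mulVec w = ((g (x t))ᵀ.mulVec c) ⬝ᵥ w := by
    intro c w
    rw [Matrix.dotProduct_mulVec, ← Matrix.mulVec_transpose]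
  have hφpDiff : Differentiable ℝ φp := hφp ▸ hφ₀.add hh
  set X := x t with hX
  set a := grad φ₀ X with ha
  set b := grad h X with hb
  set G := g X with hG
  set α := Gᵀ.mulVec a with hα
  set β := Gᵀ.mulVec b with hβ
  have hgradp : grad φp X = a + b := by rw [hφp]; exact grad_add' _ _ hφ₀ hh X
  set v := f X + G.mulVec (ustarp X) with hv
  have hd : HasDerivAt (fun s => φp (x s)) (fderiv ℝ φp X v) t :=
    (hφpDiff X).hasFDerivAt.comp_hasDerivAt t (hx t)
  have hu : ustarp X = -(1/2 : ℝ) • R⁻¹.mulVec (α + β) := by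
    rw [hustarp X, hgradp, Matrix.mulVec_add]
  -- scalars
  set A := α ⬝ᵥ R⁻¹.mulVec α with hA
  set B := β ⬝ᵥ R⁻¹.mulVec α with hB
  set C := β ⬝ᵥ R⁻¹.mulVec β with hC
  have hRMw : ∀ w : Fin p → ℝ, R.mulVec (R⁻¹.mulVec w) = w := by
    intro w
    rw [Matrix.mulVec_mulVec, hRRinv, Matrix.one_mulVec]
  -- value of derivative
  have haf : a ⬝ᵥ f X = (1/4) * A - m₀ X := by
    have := hHJB X; rw [← ha, ← hG, ← hα, ← hA] at this; linarith
  have hbf : b ⬝ᵥ f X = - mbar X + (1/2) * B := by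
    have := hPDE X
    rw [← hb, ← hG, ← hα, dotProduct_sub, dotProduct_smul, smul_eq_mul,
      hdot b (R⁻¹.mulVec α), ← hβ, ← hB] at this
    linarith
  have hsum : (α + β) ⬝ᵥ R⁻¹.mulVec (α + β) = A + 2 * B + C := by
    rw [add_dotProduct, Matrix.mulVec_add, dotProduct_add, dotProduct_add,
      hswap α β]
    rw [← hA, ← hB, ← hC]; ring
  have hval : fderiv ℝ φp X v = (1/4) * A - m₀ X + (- mbar X + (1/2) * B)
      - (1/2) * (A + 2 * B + C) := by
    rw [fderiv_apply_eq_dot, hgradp, hv, dotProduct_add, add_dotProduct,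
      add_dotProduct, hdot a, hdot b, ← hα, ← hβ, haf, hbf, hu]
    rw [dotProduct_smul, dotProduct_smul, smul_eq_mul, smul_eq_mul]
    have : α ⬝ᵥ R⁻¹.mulVec (α + β) + β ⬝ᵥ R⁻¹.mulVec (α + β)
        = A + 2 * B + C := by rw [← add_dotProduct, hsum]
    linarith [this]
  have hsq1 : sqR R (R⁻¹.mulVec β) = C := by
    rw [sqR, hRMw, dotProduct_comm, ← hC]
  have hsq2 : sqR R (ustarp X) = (1/4) * (A + 2 * B + C) := by
    rw [sqR, hu, Matrix.mulVec_smul, hRMw, smul_dotProduct, dotProduct_smul,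
      smul_eq_mul, smul_eq_mul, dotProduct_comm, hswap (α + β), ← hsum]
    ring
  have : -(m₀ X) - mbar X - (1/4) * sqR R (R⁻¹.mulVec β) - sqR R (ustarp X)
      = fderiv ℝ φp X v := by
    rw [hsq1, hsq2, hval]; ring
  rw [this]
  exact hd
end

section
/- Suppose φ̄ : (Fin n → ℝ) → ℝ is differentiable and satisfies the steady-state HJB equation with state cost m, i.e. for all x: ∇φ̄(x) ⬝ᵥ f(x) − (1/4)·((g x)ᵀ.mulVec (∇φ̄ x)) ⬝ᵥ (R⁻¹.mulVec ((g x)ᵀ.mulVec (∇φ̄ x))) + m(x) = 0. Let v : ℝ → (Fin p → ℝ) be an external input and let x : ℝ → (Fin n → ℝ) be differentiable and solve x'(t) = f(x(t)) − (1/2)·(g (x t)).mulVec (R⁻¹.mulVec ((g (x t))ᵀ.mulVec (∇φ̄ (x t)))) + (g (x t)).mulVec (v t) for all t. Then for every t, the derivative of t ↦ φ̄(x(t)) at t is at most −m(x(t)) + ‖v(t)‖²_R. -/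
open Matrix

lemma fderiv_eq_grad_dot {n : ℕ} (φ : (Fin n → ℝ) → ℝ) (a y : Fin n → ℝ) :
    fderiv ℝ φ a y = grad φ a ⬝ᵥ y := by
  have hy : y = ∑ i, y i • (Pi.single i (1:ℝ) : Fin n → ℝ) := by
    funext j
    simp [Finset.sum_apply, Pi.single_apply, Finset.sum_ite_eq']
  conv_lhs => rw [hy]
  rw [map_sum]
  simp [grad, dotProduct, mul_comm]

lemma key_ineq {p : ℕ} (R : Matrix (Fin p) (Fin p) ℝ)
    (hRsymm : R.IsSymm) (hRpd : R.PosDef) (w v : Fin p → ℝ) :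
    w ⬝ᵥ v - (1/4) * (w ⬝ᵥ R⁻¹.mulVec w) ≤ v ⬝ᵥ R.mulVec v := by
  have hdet : IsUnit R.det := isUnit_iff_ne_zero.mpr hRpd.det_pos.ne'
  have hRR : R * R⁻¹ = 1 := Matrix.mul_nonsing_inv R hdet
  set z : Fin p → ℝ := v - (1/2 : ℝ) • R⁻¹.mulVec w with hz
  have hnn : 0 ≤ z ⬝ᵥ R.mulVec z := by
    have := hRpd.posSemidef.dotProduct_mulVec_nonneg z
    simpa using this
  have hRz : R.mulVec z = R.mulVec v - (1/2 : ℝ) • w := by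
    rw [hz, Matrix.mulVec_sub, Matrix.mulVec_smul, Matrix.mulVec_mulVec, hRR, Matrix.one_mulVec]
  have hsym : ∀ a b : Fin p → ℝ, a ⬝ᵥ R.mulVec b = b ⬝ᵥ R.mulVec a := by
    intro a b
    rw [Matrix.dotProduct_mulVec, ← Matrix.mulVec_transpose, hRsymm.eq, dotProduct_comm]
  have h1 : (R⁻¹.mulVec w) ⬝ᵥ (R.mulVec v) = w ⬝ᵥ v := by
    rw [Matrix.dotProduct_mulVec, ← Matrix.mulVec_transpose, hRsymm.eq,
      Matrix.mulVec_mulVec, hRR, Matrix.one_mulVec, dotProduct_comm]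
  have h2 : (R⁻¹.mulVec w) ⬝ᵥ w = w ⬝ᵥ R⁻¹.mulVec w := dotProduct_comm _ _
  have hexp : z ⬝ᵥ R.mulVec z
      = v ⬝ᵥ R.mulVec v - w ⬝ᵥ v + (1/4) * (w ⬝ᵥ R⁻¹.mulVec w) := by
    rw [hz, hRz]
    simp only [sub_dotProduct, dotProduct_sub, smul_dotProduct, dotProduct_smul,
      smul_eq_mul, h1, h2]
    have h3 : v ⬝ᵥ w = w ⬝ᵥ v := dotProduct_comm _ _
    rw [h3]; ring
  linarith [hnn, hexp.symm ▸ hnn]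

theorem stmt_12 {n p : ℕ}
    (f : (Fin n → ℝ) → (Fin n → ℝ))
    (g : (Fin n → ℝ) → Matrix (Fin n) (Fin p) ℝ)
    (R : Matrix (Fin p) (Fin p) ℝ)
    (hRsymm : R.IsSymm) (hRpd : R.PosDef)
    (m : (Fin n → ℝ) → ℝ)
    (φb : (Fin n → ℝ) → ℝ)
    (hφ : Differentiable ℝ φb)
    (hHJB : ∀ x, grad φb x ⬝ᵥ f x
        - (1/4) * ((g x)ᵀ.mulVec (grad φb x) ⬝ᵥ R⁻¹.mulVec ((g x)ᵀ.mulVec (grad φb x)))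
        + m x = 0)
    (v : ℝ → (Fin p → ℝ))
    (x : ℝ → (Fin n → ℝ))
    (hx : ∀ t, HasDerivAt x
      (f (x t) - (1/2 : ℝ) • (g (x t)).mulVec (R⁻¹.mulVec ((g (x t))ᵀ.mulVec (grad φb (x t))))
        + (g (x t)).mulVec (v t)) t) :
    ∀ t, deriv (fun s => φb (x s)) t ≤ -(m (x t)) + sqR R (v t) := by
  intro t
  set G := grad φb (x t) with hG
  set w := (g (x t))ᵀ.mulVec G with hw
  set x' := f (x t) - (1/2 : ℝ) • (g (x t)).mulVec (R⁻¹.mulVec w) + (g (x t)).mulVec (v t)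
    with hx'
  have hcomp : HasDerivAt (fun s => φb (x s)) (fderiv ℝ φb (x t) x') t :=
    (hφ (x t)).hasFDerivAt.comp_hasDerivAt t (hx t)
  have hder : deriv (fun s => φb (x s)) t = G ⬝ᵥ x' := by
    rw [hcomp.deriv, fderiv_eq_grad_dot]
  have hdot : ∀ u : Fin p → ℝ, G ⬝ᵥ (g (x t)).mulVec u = w ⬝ᵥ u := by
    intro u
    rw [Matrix.dotProduct_mulVec, ← Matrix.mulVec_transpose]
  have hexp : G ⬝ᵥ x' = G ⬝ᵥ f (x t) - (1/2) * (w ⬝ᵥ R⁻¹.mulVec w) + w ⬝ᵥ v t := by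
    rw [hx', dotProduct_add, dotProduct_sub, dotProduct_smul, hdot, hdot, smul_eq_mul]
  have hHJB' := hHJB (x t)
  rw [← hw] at hHJB'
  have hkey := key_ineq R hRsymm hRpd w (v t)
  rw [hder, hexp, sqR]
  linarith
end

section
/- Suppose φ̄ : (Fin n → ℝ) → ℝ is continuously differentiable and satisfies the steady-state HJB equation with state cost m (continuous), i.e. for all x: ∇φ̄(x) ⬝ᵥ f(x) − (1/4)·((g x)ᵀ.mulVec (∇φ̄ x)) ⬝ᵥ (R⁻¹.mulVec ((g x)ᵀ.mulVec (∇φ̄ x))) + m(x) = 0. Let g be continuous, let v : ℝ → (Fin p → ℝ) be continuous, and let x : ℝ → (Fin n → ℝ) be continuously differentiable and solve x'(t) = f(x(t)) − (1/2)·(g (x t)).mulVec (R⁻¹.mulVec ((g (x t))ᵀ.mulVec (∇φ̄ (x t)))) + (g (x t)).mulVec (v t) for all t. Then for all t₀ ≤ t₁, the dissipation inequality holds: φ̄(x(t₁)) − φ̄(x(t₀)) ≤ ∫_{t₀}^{t₁} ( −m(x(t)) + ‖v(t)‖²_R ) dt. -/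
open Matrix

lemma fderiv_eq_dot {n : ℕ} (φ : (Fin n → ℝ) → ℝ) (y u : Fin n → ℝ) :
    fderiv ℝ φ y u = grad φ y ⬝ᵥ u := by
  have hu : u = ∑ i, u i • (Pi.single i (1:ℝ) : Fin n → ℝ) := by
    ext j
    simp [Pi.single_apply, Finset.sum_apply, Finset.sum_ite_eq, mul_comm]
  conv_lhs => rw [hu]
  rw [map_sum]
  simp only [_root_.map_smul]
  simp [grad, dotProduct, mul_comm]

lemma continuous_mulVec' {n p : ℕ} {M : ℝ → Matrix (Fin n) (Fin p) ℝ} {u : ℝ → Fin p → ℝ}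
    (hM : Continuous M) (hu : Continuous u) :
    Continuous (fun t => (M t).mulVec (u t)) := by
  apply continuous_pi; intro i
  simp only [Matrix.mulVec, dotProduct]
  exact continuous_finset_sum _ fun j _ =>
    ((continuous_apply j).comp ((continuous_apply i).comp hM)).mul ((continuous_apply j).comp hu)

lemma continuous_dot {n : ℕ} {a b : ℝ → Fin n → ℝ} (ha : Continuous a) (hb : Continuous b) :
    Continuous (fun t => a t ⬝ᵥ b t) := by
  simp only [dotProduct]
  exact continuous_finset_sum _ fun j _ =>
    ((continuous_apply j).comp ha).mul ((continuous_apply j).comp hb)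

theorem stmt_13 {n p : ℕ}
    (f : (Fin n → ℝ) → (Fin n → ℝ))
    (g : (Fin n → ℝ) → Matrix (Fin n) (Fin p) ℝ)
    (hg : Continuous g)
    (R : Matrix (Fin p) (Fin p) ℝ)
    (hRsymm : R.IsSymm) (hRpd : R.PosDef)
    (m : (Fin n → ℝ) → ℝ) (hm : Continuous m)
    (φb : (Fin n → ℝ) → ℝ)
    (hφ : ContDiff ℝ 1 φb)
    (hHJB : ∀ x, grad φb x ⬝ᵥ f x
        - (1/4) * ((g x)ᵀ.mulVec (grad φb x) ⬝ᵥ R⁻¹.mulVec ((g x)ᵀ.mulVec (grad φb x)))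
        + m x = 0)
    (v : ℝ → (Fin p → ℝ)) (hv : Continuous v)
    (x : ℝ → (Fin n → ℝ)) (hxC1 : ContDiff ℝ 1 x)
    (hx : ∀ t, HasDerivAt x
      (f (x t) - (1/2 : ℝ) • (g (x t)).mulVec (R⁻¹.mulVec ((g (x t))ᵀ.mulVec (grad φb (x t))))
        + (g (x t)).mulVec (v t)) t) :
    ∀ t₀ t₁ : ℝ, t₀ ≤ t₁ →
      φb (x t₁) - φb (x t₀) ≤ ∫ t in t₀..t₁, (-(m (x t)) + sqR R (v t)) := by
  intro t₀ t₁ ht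
  set x' : ℝ → Fin n → ℝ := fun t =>
    f (x t) - (1/2 : ℝ) • (g (x t)).mulVec (R⁻¹.mulVec ((g (x t))ᵀ.mulVec (grad φb (x t))))
      + (g (x t)).mulVec (v t) with hx'def
  set D : ℝ → ℝ := fun t => grad φb (x t) ⬝ᵥ x' t with hDdef
  -- invertibility facts
  have hRinv : R * R⁻¹ = 1 := Matrix.mul_nonsing_inv R (isUnit_iff_ne_zero.2 hRpd.det_pos.ne')
  -- derivative of φb ∘ x
  have key : ∀ t, HasDerivAt (fun t => φb (x t)) (D t) t := by
    intro t
    have h1 : HasDerivAt (fun t => φb (x t)) (fderiv ℝ φb (x t) (x' t)) t :=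
      ((hφ.differentiable one_ne_zero) (x t)).hasFDerivAt.comp_hasDerivAt t (hx t)
    show HasDerivAt (fun t => φb (x t)) (grad φb (x t) ⬝ᵥ x' t) t
    rw [← fderiv_eq_dot]
    exact h1
  -- continuity of grad φb ∘ x
  have hgradc : Continuous (fun t => grad φb (x t)) := by
    apply continuous_pi; intro i
    exact ((hφ.continuous_fderiv one_ne_zero).comp hxC1.continuous).clm_apply continuous_const
  have hgc : Continuous (fun t => g (x t)) := hg.comp hxC1.continuous
  have hgtc : Continuous (fun t => (g (x t))ᵀ) := by
    apply continuous_pi; intro i; apply continuous_pi; intro j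
    exact (continuous_apply i).comp ((continuous_apply j).comp hgc)
  have hx'c : Continuous x' := by
    have hde : x' = deriv x := funext fun t => ((hx t).deriv).symm
    rw [hde]
    exact hxC1.continuous_deriv le_rfl
  have hDc : Continuous D := continuous_dot hgradc hx'c
  have hRHSc : Continuous (fun t => -(m (x t)) + sqR R (v t)) := by
    refine ((hm.comp hxC1.continuous).neg).add ?_
    exact continuous_dot hv (continuous_mulVec' continuous_const hv)
  -- pointwise bound
  have hbound : ∀ t, D t ≤ -(m (x t)) + sqR R (v t) := by
    intro t
    set a := grad φb (x t)
    set G := g (x t)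
    set w := Gᵀ.mulVec a with hw
    set vt := v t
    have hdual : ∀ u : Fin p → ℝ, a ⬝ᵥ G.mulVec u = w ⬝ᵥ u := by
      intro u
      rw [Matrix.dotProduct_mulVec, hw, Matrix.mulVec_transpose]
    have hDval : D t = a ⬝ᵥ f (x t) - (1/2) * (w ⬝ᵥ R⁻¹.mulVec w) + w ⬝ᵥ vt := by
      show a ⬝ᵥ (f (x t) - (1/2:ℝ) • G.mulVec (R⁻¹.mulVec w) + G.mulVec vt) = _
      rw [dotProduct_add, dotProduct_sub, dotProduct_smul,
        hdual, hdual, smul_eq_mul]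
    have hHJ := hHJB (x t)
    -- quadratic form nonnegativity
    have hz : (0:ℝ) ≤ (vt - (1/2:ℝ) • R⁻¹.mulVec w) ⬝ᵥ R.mulVec (vt - (1/2:ℝ) • R⁻¹.mulVec w) := by
      have := hRpd.posSemidef.dotProduct_mulVec_nonneg (vt - (1/2:ℝ) • R⁻¹.mulVec w)
      simpa using this
    have e1 : R.mulVec (R⁻¹.mulVec w) = w := by
      rw [Matrix.mulVec_mulVec, hRinv, Matrix.one_mulVec]
    have e2 : (R⁻¹.mulVec w) ⬝ᵥ R.mulVec vt = w ⬝ᵥ vt := by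
      rw [Matrix.dotProduct_mulVec, ← Matrix.mulVec_transpose, Matrix.mulVec_mulVec,
        hRsymm.eq, hRinv, Matrix.one_mulVec]
    have e3 : (R⁻¹.mulVec w) ⬝ᵥ w = w ⬝ᵥ R⁻¹.mulVec w := dotProduct_comm _ _
    have hexp : (vt - (1/2:ℝ) • R⁻¹.mulVec w) ⬝ᵥ R.mulVec (vt - (1/2:ℝ) • R⁻¹.mulVec w)
        = vt ⬝ᵥ R.mulVec vt - w ⬝ᵥ vt + (1/4) * (w ⬝ᵥ R⁻¹.mulVec w) := by
      rw [Matrix.mulVec_sub, Matrix.mulVec_smul, sub_dotProduct,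
        dotProduct_sub, dotProduct_sub,
        smul_dotProduct, smul_dotProduct, dotProduct_smul,
        dotProduct_smul, e1, e2, e3]
      have : vt ⬝ᵥ w = w ⬝ᵥ vt := dotProduct_comm _ _
      simp only [smul_eq_mul]
      rw [this]; ring
    rw [hexp] at hz
    have : a ⬝ᵥ f (x t) = (1/4) * (w ⬝ᵥ R⁻¹.mulVec w) - m (x t) := by linarith [hHJ]
    rw [hDval, this, sqR]
    linarith
  have hint : φb (x t₁) - φb (x t₀) = ∫ t in t₀..t₁, D t :=
    (intervalIntegral.integral_eq_sub_of_hasDerivAt (fun t _ => key t)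
      (hDc.intervalIntegrable t₀ t₁)).symm
  rw [hint]
  exact intervalIntegral.integral_mono_on ht (hDc.intervalIntegrable t₀ t₁)
    (hRHSc.intervalIntegrable t₀ t₁) (fun t _ => hbound t)
end
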